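/- For t > r ≥ 1 and n = 4t - 3r, the 2 × n slant grid graph has (t,r) broadcast domination number equal to 2, witnessed by towers at the top row column t - r + 1 and bottom row column n - (t - r + 1) + 1 appropriately placed so that every vertex receives signal at least r and every doubly-covered vertex receives exactly r. -/

import Mathlib

/-- The 2 × n slant grid graph: rows are `Fin 2` (index 0 = bottom row, index 1 = top
row), columns are `Fin n`; grid edges plus diagonal edges joining bottom (0, j) to
top (1, j+1). -/
def slantGraph (n : ℕ) : SimpleGraph (Fin 2 × Fin n) where
  Adj v w :=
    (v.1 = w.1 ∧ ((v.2.val : ℤ) - (w.2.val : ℤ)).natAbs = 1) ∨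
    (v.2 = w.2 ∧ v.1 ≠ w.1) ∨
    (v.1.val = 0 ∧ w.1.val = 1 ∧ w.2.val = v.2.val + 1) ∨
    (w.1.val = 0 ∧ v.1.val = 1 ∧ v.2.val = w.2.val + 1)
  symm := by
    constructor
    rintro v w (⟨h1, h2⟩ | ⟨h1, h2⟩ | ⟨h1, h2, h3⟩ | ⟨h1, h2, h3⟩)
    · exact Or.inl ⟨h1.symm, by rw [← Int.natAbs_neg, neg_sub]; exact h2⟩
    · exact Or.inr (Or.inl ⟨h1.symm, h2.symm⟩)
    · exact Or.inr (Or.inr (Or.inr ⟨h1, h2, h3⟩))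
    · exact Or.inr (Or.inr (Or.inl ⟨h1, h2, h3⟩))
  loopless := by
    constructor
    rintro v (⟨-, h⟩ | ⟨-, h⟩ | ⟨h1, h2, -⟩ | ⟨h1, h2, -⟩)
    · simp at h
    · exact h rfl
    · omega
    · omega

namespace SlantAux

variable {n : ℕ}

/-- Closed-form distance for the slant graph. -/
def D (v w : Fin 2 × Fin n) : ℕ :=
  max ((v.2.val : ℤ) - w.2.val).natAbs
      ((v.2.val : ℤ) - v.1.val - w.2.val + w.1.val).natAbs

lemma adj_c {v w : Fin 2 × Fin n} (h : (slantGraph n).Adj v w) :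
    ((v.2.val : ℤ) - w.2.val).natAbs ≤ 1 := by
  rcases h with ⟨h1, h2⟩ | ⟨h1, h2⟩ | ⟨h1, h2, h3⟩ | ⟨h1, h2, h3⟩
  · omega
  · have := congrArg Fin.val h1; omega
  · omega
  · omega

lemma adj_h {v w : Fin 2 × Fin n} (h : (slantGraph n).Adj v w) :
    ((v.2.val : ℤ) - v.1.val - w.2.val + w.1.val).natAbs ≤ 1 := by
  have hv : v.1.val < 2 := v.1.isLt
  have hw : w.1.val < 2 := w.1.isLt
  rcases h with ⟨h1, h2⟩ | ⟨h1, h2⟩ | ⟨h1, h2, h3⟩ | ⟨h1, h2, h3⟩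
  · have := congrArg Fin.val h1; omega
  · have := congrArg Fin.val h1; omega
  · omega
  · omega

lemma c_le_length {v w : Fin 2 × Fin n} (p : (slantGraph n).Walk v w) :
    ((v.2.val : ℤ) - w.2.val).natAbs ≤ p.length := by
  induction p with
  | nil => simp
  | cons h q ih =>
      have := adj_c h
      rw [SimpleGraph.Walk.length_cons]
      omega

lemma h_le_length {v w : Fin 2 × Fin n} (p : (slantGraph n).Walk v w) :
    ((v.2.val : ℤ) - v.1.val - w.2.val + w.1.val).natAbs ≤ p.length := by
  induction p with
  | nil => simp
  | cons h q ih =>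
      have := adj_h h
      rw [SimpleGraph.Walk.length_cons]
      omega

lemma exists_walk (k : ℕ) : ∀ v w : Fin 2 × Fin n, D v w ≤ k →
    ∃ p : (slantGraph n).Walk v w, p.length ≤ D v w := by
  induction k with
  | zero =>
      intro v w hD
      have h1 : ((v.2.val : ℤ) - w.2.val).natAbs ≤ 0 := le_trans (le_max_left _ _) hD
      have h2 : ((v.2.val : ℤ) - v.1.val - w.2.val + w.1.val).natAbs ≤ 0 :=
        le_trans (le_max_right _ _) hD
      have : v = w := by
        have hc : v.2.val = w.2.val := by omega
        have hr : v.1.val = w.1.val := by omega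
        exact Prod.ext (Fin.ext hr) (Fin.ext hc)
      subst this
      exact ⟨SimpleGraph.Walk.nil, by simp⟩
  | succ k ih =>
      intro v w hD
      by_cases hvw : v = w
      · subst hvw; exact ⟨SimpleGraph.Walk.nil, by simp⟩
      obtain ⟨a, i⟩ := v
      obtain ⟨b, j⟩ := w
      have ha2 : a.val < 2 := a.isLt
      have hb2 : b.val < 2 := b.isLt
      have hjn : j.val < n := j.isLt
      have hin : i.val < n := i.isLt
      have step : ∃ u : Fin 2 × Fin n, (slantGraph n).Adj (a, i) u ∧
          D u (b, j) + 1 ≤ D (a, i) (b, j) := by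
        by_cases hab : a = b
        · subst hab
          have hij : i.val ≠ j.val := by
            intro h
            exact hvw (by rw [show i = j from Fin.ext h])
          rcases Nat.lt_or_ge i.val j.val with h | h
          · refine ⟨(a, ⟨i.val + 1, by omega⟩), Or.inl ⟨rfl, ?_⟩, ?_⟩
            · show ((i.val : ℤ) - ((i.val + 1 : ℕ) : ℤ)).natAbs = 1
              omega
            · simp only [D]
              omega
          · refine ⟨(a, ⟨i.val - 1, by omega⟩), Or.inl ⟨rfl, ?_⟩, ?_⟩
            · show ((i.val : ℤ) - ((i.val - 1 : ℕ) : ℤ)).natAbs = 1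
              omega
            · simp only [D]
              omega
        · have hvals : a.val ≠ b.val := fun h => hab (Fin.ext h)
          rcases Nat.lt_or_ge a.val 1 with ha | ha
          · -- a = 0, b = 1
            have ha0 : a.val = 0 := by omega
            have hb1 : b.val = 1 := by omega
            rcases Nat.lt_or_ge i.val j.val with h | h
            · -- diagonal up-right
              refine ⟨(⟨1, by omega⟩, ⟨i.val + 1, by omega⟩),
                Or.inr (Or.inr (Or.inl ⟨ha0, rfl, rfl⟩)), ?_⟩
              simp only [D]
              omega
            · -- vertical up
              refine ⟨(⟨1, by omega⟩, i), Or.inr (Or.inl ⟨rfl, ?_⟩), ?_⟩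
              · intro hcon
                have := congrArg Fin.val hcon
                simp at this
                omega
              · simp only [D]
                omega
          · -- a = 1, b = 0
            have ha1 : a.val = 1 := by omega
            have hb0 : b.val = 0 := by omega
            rcases Nat.lt_or_ge j.val i.val with h | h
            · -- diagonal down-left
              refine ⟨(⟨0, by omega⟩, ⟨i.val - 1, by omega⟩),
                Or.inr (Or.inr (Or.inr ⟨rfl, ha1, ?_⟩)), ?_⟩
              · show i.val = (i.val - 1) + 1
                omega
              · simp only [D]
                omega
            · -- vertical down
              refine ⟨(⟨0, by omega⟩, i), Or.inr (Or.inl ⟨rfl, ?_⟩), ?_⟩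
              · intro hcon
                have := congrArg Fin.val hcon
                simp at this
                omega
              · simp only [D]
                omega
      obtain ⟨u, hadj, hlt⟩ := step
      obtain ⟨p, hp⟩ := ih u (b, j) (by omega)
      exact ⟨SimpleGraph.Walk.cons hadj p, by rw [SimpleGraph.Walk.length_cons]; omega⟩

lemma dist_eq (v w : Fin 2 × Fin n) : (slantGraph n).dist v w = D v w := by
  obtain ⟨p, hp⟩ := exists_walk (D v w) v w le_rfl
  refine le_antisymm (le_trans (SimpleGraph.dist_le p) hp) ?_
  obtain ⟨q, hq⟩ := (p.reachable).exists_walk_length_eq_dist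
  calc D v w ≤ q.length := max_le (c_le_length q) (h_le_length q)
  _ = _ := hq

lemma cover_aux (n t r : ℕ) (hr : 1 ≤ r) (hrt : r < t) (hn : n = 4*t-3*r)
    (h1 : t - r < n) (h2 : n - (t - r + 1) < n) (v : Fin 2 × Fin n) :
    r ≤ (t - (slantGraph n).dist v ((1 : Fin 2), ⟨t - r, h1⟩))
      + (t - (slantGraph n).dist v ((0 : Fin 2), ⟨n - (t - r + 1), h2⟩)) := by
  obtain ⟨a, c⟩ := v
  have ha2 : a.val < 2 := a.isLt
  have hc : c.val < n := c.isLt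
  rw [dist_eq, dist_eq]
  simp only [D, Fin.isValue, Fin.val_one, Fin.val_zero]
  omega

lemma exact_aux (n t r : ℕ) (hr : 1 ≤ r) (hrt : r < t) (hn : n = 4*t-3*r)
    (h1 : t - r < n) (h2 : n - (t - r + 1) < n) (v : Fin 2 × Fin n)
    (hdA : (slantGraph n).dist v ((1 : Fin 2), ⟨t - r, h1⟩) ≤ t - 1)
    (hdB : (slantGraph n).dist v ((0 : Fin 2), ⟨n - (t - r + 1), h2⟩) ≤ t - 1) :
    (t - (slantGraph n).dist v ((1 : Fin 2), ⟨t - r, h1⟩))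
      + (t - (slantGraph n).dist v ((0 : Fin 2), ⟨n - (t - r + 1), h2⟩)) = r := by
  obtain ⟨a, c⟩ := v
  have ha2 : a.val < 2 := a.isLt
  have hc : c.val < n := c.isLt
  simp only [dist_eq] at hdA hdB ⊢
  simp only [D, Fin.isValue, Fin.val_one, Fin.val_zero] at hdA hdB ⊢
  omega

lemma single_aux (n t r : ℕ) (hr : 1 ≤ r) (hrt : r < t) (hn : n = 4*t-3*r)
    (w : Fin 2 × Fin n) :
    ¬ (∀ v : Fin 2 × Fin n, r ≤ t - (slantGraph n).dist v w) := by
  intro hcov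
  have hwn : w.2.val < n := w.2.isLt
  have hl := hcov (w.1, (⟨0, by omega⟩ : Fin n))
  have hr' := hcov (w.1, (⟨n - 1, by omega⟩ : Fin n))
  simp only [dist_eq] at hl hr'
  simp only [D] at hl hr'
  omega

end SlantAux

/-- For t > r ≥ 1 and n = 4t - 3r, the 2 × n slant grid graph has (t,r) broadcast
domination number 2, witnessed by towers in the top row, column t-r+1 (1-based) and
the bottom row, column n-(t-r+1)+1 (1-based): every vertex receives signal ≥ r and
every vertex covered by both towers receives signal exactly r. -/
theorem slant_2xn_starting_block (n t r : ℕ) (hr : 1 ≤ r) (hrt : r < t)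
    (hn : n = 4 * t - 3 * r) :
    sInf {k : ℕ | ∃ T : Finset (Fin 2 × Fin n), T.card = k ∧
        ∀ v, r ≤ ∑ w ∈ T, (t - (slantGraph n).dist v w)} = 2 ∧
    ∃ T : Finset (Fin 2 × Fin n),
      T = {((1 : Fin 2), (⟨t - r, by omega⟩ : Fin n)),
           ((0 : Fin 2), (⟨n - (t - r + 1), by omega⟩ : Fin n))} ∧
      (∀ v, r ≤ ∑ w ∈ T, (t - (slantGraph n).dist v w)) ∧
      (∀ v, (∀ w ∈ T, (slantGraph n).dist v w ≤ t - 1) →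
        ∑ w ∈ T, (t - (slantGraph n).dist v w) = r) := by
  have h1 : t - r < n := by omega
  have h2 : n - (t - r + 1) < n := by omega
  have hAB : ((1 : Fin 2), (⟨t - r, h1⟩ : Fin n)) ≠ ((0 : Fin 2), (⟨n - (t - r + 1), h2⟩ : Fin n)) := by
    intro h
    have := congrArg (fun x => (Prod.fst x).val) h
    simp at this
  have hsum : ∀ v, ∑ w ∈ ({((1 : Fin 2), (⟨t - r, h1⟩ : Fin n)),
        ((0 : Fin 2), (⟨n - (t - r + 1), h2⟩ : Fin n))} : Finset (Fin 2 × Fin n)),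
        (t - (slantGraph n).dist v w)
      = (t - (slantGraph n).dist v ((1 : Fin 2), ⟨t - r, h1⟩))
        + (t - (slantGraph n).dist v ((0 : Fin 2), ⟨n - (t - r + 1), h2⟩)) := by
    intro v
    rw [Finset.sum_pair hAB]
  have hmem2 : (2 : ℕ) ∈ {k : ℕ | ∃ T : Finset (Fin 2 × Fin n), T.card = k ∧
      ∀ v, r ≤ ∑ w ∈ T, (t - (slantGraph n).dist v w)} := by
    refine ⟨_, Finset.card_pair hAB, ?_⟩
    intro v
    rw [hsum v]
    exact SlantAux.cover_aux n t r hr hrt hn h1 h2 v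
  constructor
  · refine le_antisymm (Nat.sInf_le hmem2) (le_csInf ⟨2, hmem2⟩ ?_)
    rintro k ⟨T, hcard, hcov⟩
    by_contra hk
    push_neg at hk
    interval_cases k
    · rw [Finset.card_eq_zero] at hcard
      subst hcard
      have := hcov ((0 : Fin 2), (⟨0, by omega⟩ : Fin n))
      simp at this
      omega
    · rw [Finset.card_eq_one] at hcard
      obtain ⟨w, rfl⟩ := hcard
      refine SlantAux.single_aux n t r hr hrt hn w (fun v => ?_)
      have := hcov v
      rwa [Finset.sum_singleton] at this
  · refine ⟨_, rfl, ?_, ?_⟩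
    · intro v
      rw [hsum v]
      exact SlantAux.cover_aux n t r hr hrt hn h1 h2 v
    · intro v hcovv
      rw [hsum v]
      exact SlantAux.exact_aux n t r hr hrt hn h1 h2 v
        (hcovv _ (by simp)) (hcovv _ (by simp [hAB]))
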